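/- For every sufficiently large integer c there exists a finite simple graph G = (R,E) and a subset Y ⊆ R such that td(G) ≤ c, |Y| ≥ 2^{c-3}, conf_R(Y) = α(G) - α(G - Y) > 0, and for every proper subset Ȳ ⊊ Y one has conf_R(Ȳ) = α(G) - α(G - Ȳ) = 0. -/

import Mathlib

/-- `TreeDepthLE G h` : `G` is a subgraph of the closure of a rooted forest of height
at most `h`, encoded via the strict ancestor relation `r` of the forest. -/
def TreeDepthLE {V : Type*} (G : SimpleGraph V) (h : ℕ) : Prop :=
  ∃ r : V → V → Prop,
    Transitive r ∧ Irreflexive r ∧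
    (∀ u v, G.Adj u v → r u v ∨ r v u) ∧
    (∀ a b v, r a v → r b v → a = b ∨ r a b ∨ r b a) ∧
    ∃ d : V → ℕ, (∀ u v, r u v → d u < d v) ∧ ∀ v, d v < h

/-- The treedepth of a finite simple graph. -/
noncomputable def treedepth {V : Type*} [Fintype V] (G : SimpleGraph V) : ℕ :=
  sInf {h | TreeDepthLE G h}

/-- An independent set of a simple graph. -/
def IsIndepSet' {V : Type*} (G : SimpleGraph V) (s : Finset V) : Prop :=
  ∀ a ∈ s, ∀ b ∈ s, ¬ G.Adj a b

/-- The independence number of a finite simple graph. -/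
noncomputable def alpha {V : Type*} [Fintype V] (G : SimpleGraph V) : ℕ :=
  sSup {n | ∃ s : Finset V, IsIndepSet' G s ∧ s.card = n}


/-- `conf G univ Y = α(G) - α(G - Y)` where `G - Y` is the induced subgraph on the
complement of `Y`. -/
noncomputable def confAll {n : ℕ} (G : SimpleGraph (Fin n)) (Y : Finset (Fin n)) : ℕ :=
  alpha G - alpha (G.induce ((Yᶜ : Finset (Fin n)) : Set (Fin n)))

namespace MC

/-! ### generic alpha lemmas -/

lemma alpha_bddAbove {V : Type*} [Fintype V] (G : SimpleGraph V) :
    BddAbove {n | ∃ s : Finset V, IsIndepSet' G s ∧ s.card = n} := by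
  refine ⟨Fintype.card V, ?_⟩
  rintro n ⟨s, _, rfl⟩
  exact s.card_le_univ

lemma alpha_le_of {V : Type*} [Fintype V] (G : SimpleGraph V) (m : ℕ)
    (h : ∀ S : Finset V, IsIndepSet' G S → S.card ≤ m) : alpha G ≤ m := by
  refine csSup_le ⟨0, ∅, ?_, rfl⟩ ?_
  · intro a ha; simp at ha
  · rintro n ⟨S, hS, rfl⟩; exact h S hS

lemma le_alpha {V : Type*} [Fintype V] (G : SimpleGraph V) (S : Finset V)
    (h : IsIndepSet' G S) : S.card ≤ alpha G :=
  le_csSup (alpha_bddAbove G) ⟨S, h, rfl⟩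

lemma alpha_induce_le {n : ℕ} (G : SimpleGraph (Fin n)) (s : Set (Fin n)) [Fintype s] (m : ℕ)
    (h : ∀ S : Finset (Fin n), IsIndepSet' G S → (∀ x ∈ S, x ∈ s) → S.card ≤ m) :
    alpha (G.induce s) ≤ m := by
  refine alpha_le_of _ _ ?_
  intro S hS
  classical
  have hinj : Set.InjOn (Subtype.val : s → Fin n) S := fun a _ b _ hab => Subtype.ext hab
  have hcard : (S.image Subtype.val).card = S.card := Finset.card_image_of_injOn hinj
  rw [← hcard]
  refine h _ ?_ ?_
  · intro a ha b hb hadj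
    simp only [Finset.mem_image] at ha hb
    obtain ⟨a', ha', rfl⟩ := ha
    obtain ⟨b', hb', rfl⟩ := hb
    exact hS a' ha' b' hb' (by simpa using hadj)
  · intro x hx
    simp only [Finset.mem_image] at hx
    obtain ⟨x', _, rfl⟩ := hx
    exact x'.2

lemma le_alpha_induce {n : ℕ} (G : SimpleGraph (Fin n)) (s : Set (Fin n)) [Fintype s]
    (S : Finset (Fin n)) (hS : IsIndepSet' G S) (hsub : ∀ x ∈ S, x ∈ s) :
    S.card ≤ alpha (G.induce s) := by
  classical
  let S' : Finset s := S.attach.image (fun x => (⟨x.1, hsub x.1 x.2⟩ : s))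
  have hcard : S'.card = S.card := by
    rw [Finset.card_image_of_injOn, Finset.card_attach]
    intro a _ b _ hab
    simp only [Subtype.mk.injEq] at hab
    exact Subtype.ext hab
  have hind : IsIndepSet' (G.induce s) S' := by
    intro a ha b hb hadj
    simp only [S', Finset.mem_image, Finset.mem_attach, true_and] at ha hb
    obtain ⟨⟨a', ha'⟩, rfl⟩ := ha
    obtain ⟨⟨b', hb'⟩, rfl⟩ := hb
    exact hS a' ha' b' hb' (by simpa using hadj)
  calc S.card = S'.card := hcard.symm
    _ ≤ alpha (G.induce s) := le_alpha _ _ hind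

/-! ### the graph -/

def Ec (t x y : ℕ) : Prop :=
  (x = 0 ∧ y = 1) ∨
  (1 ≤ x ∧ x < 2*t ∧ y = x+1) ∨
  (x = 2*t ∧ y = 2*t+1) ∨
  (1 ≤ x ∧ x ≤ 2*t ∧ y = 2*t+1+x) ∨
  (1 ≤ x ∧ x ≤ 2*t ∧ y = 4*t+1+x) ∨
  (2*t+2 ≤ x ∧ x ≤ 4*t+1 ∧ y = x + 2*t) ∨
  (∃ i, 1 ≤ i ∧ i ≤ t ∧ x = 4*t + 2*i ∧ y = 4*t + 2*i + 1)

def GG (t : ℕ) : SimpleGraph (Fin (6*t+2)) :=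
  SimpleGraph.fromRel (fun x y => Ec t x.val y.val)

lemma indep_of_noEc (t : ℕ) (S : Finset (Fin (6*t+2)))
    (h : ∀ x ∈ S, ∀ y ∈ S, ¬ Ec t x.val y.val) : IsIndepSet' (GG t) S := by
  intro a ha b hb hadj
  rcases (SimpleGraph.fromRel_adj _ _ _).1 hadj with ⟨_, h' | h'⟩
  · exact h a ha b hb h'
  · exact h b hb a ha h'

/-- the clique-classifier -/
def gcl (t x : ℕ) : ℕ :=
  if x ≤ 2*t+1 then x else if x ≤ 4*t+1 then x - (2*t+1) else x - (4*t+1)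

lemma card_le_of_indep (t : ℕ) (S : Finset (Fin (6*t+2)))
    (h : IsIndepSet' (GG t) S) : S.card ≤ 2*t+2 := by
  classical
  have key : ∀ a b : ℕ, a < 6*t+2 → b < 6*t+2 → a < b → gcl t a = gcl t b → Ec t a b := by
    intro a b ha hb hab hg
    unfold gcl at hg
    unfold Ec
    split_ifs at hg <;>
      first
        | omega
        | exact Or.inr (Or.inr (Or.inr (Or.inl (by omega))))
        | exact Or.inr (Or.inr (Or.inr (Or.inr (Or.inl (by omega)))))
        | exact Or.inr (Or.inr (Or.inr (Or.inr (Or.inr (Or.inl (by omega))))))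
  have hsub : ∀ x ∈ S, gcl t x.val ∈ Finset.range (2*t+2) := by
    intro x _
    simp only [Finset.mem_range, gcl]
    have := x.2
    split_ifs <;> omega
  have hinj : Set.InjOn (fun x : Fin (6*t+2) => gcl t x.val) S := by
    intro x hx y hy hxy
    by_contra hne
    rcases lt_trichotomy x.val y.val with hlt | heq | hlt
    · exact h x hx y hy ((SimpleGraph.fromRel_adj _ _ _).2
        ⟨hne, Or.inl (key _ _ x.2 y.2 hlt hxy)⟩)
    · exact hne (Fin.ext heq)
    · exact h x hx y hy ((SimpleGraph.fromRel_adj _ _ _).2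
        ⟨hne, Or.inr (key _ _ y.2 x.2 hlt hxy.symm)⟩)
  calc S.card ≤ (Finset.range (2*t+2)).card := Finset.card_le_card_of_injOn _ hsub hinj
    _ = 2*t+2 := Finset.card_range _

lemma Sfull_lt (t : ℕ) : ∀ m ∈ insert 0 (Finset.Icc (2*t+1) (4*t+1)), m < 6*t+2 := by
  intro m hm
  simp only [Finset.mem_insert, Finset.mem_Icc] at hm
  omega

def Sfull (t : ℕ) : Finset (Fin (6*t+2)) :=
  Finset.attachFin (insert 0 (Finset.Icc (2*t+1) (4*t+1))) (Sfull_lt t)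

lemma Sfull_card (t : ℕ) (ht : 1 ≤ t) : (Sfull t).card = 2*t+2 := by
  rw [Sfull, Finset.card_attachFin, Finset.card_insert_of_notMem, Nat.card_Icc]
  · omega
  · simp only [Finset.mem_Icc]; omega

lemma Sfull_indep (t : ℕ) (ht : 1 ≤ t) : IsIndepSet' (GG t) (Sfull t) := by
  refine indep_of_noEc t _ ?_
  intro x hx y hy hE
  rw [Sfull, Finset.mem_attachFin] at hx hy
  simp only [Finset.mem_insert, Finset.mem_Icc] at hx hy
  rcases hE with ⟨h1,h2⟩|⟨h1,h2,h3⟩|⟨h1,h2⟩|⟨h1,h2,h3⟩|⟨h1,h2,h3⟩|⟨h1,h2,h3⟩|⟨i,h1,h2,h3,h4⟩ <;>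
    omega

lemma alpha_GG (t : ℕ) (ht : 1 ≤ t) : alpha (GG t) = 2*t+2 := by
  refine le_antisymm (alpha_le_of _ _ (card_le_of_indep t)) ?_
  have := le_alpha (GG t) (Sfull t) (Sfull_indep t ht)
  rwa [Sfull_card t ht] at this

/-! ### Y and the bound on G - Y -/

lemma Y_lt (t : ℕ) : ∀ m ∈ Finset.Icc (2*t+2) (4*t+1), m < 6*t+2 := by
  intro m hm; simp only [Finset.mem_Icc] at hm; omega

def Yc (t : ℕ) : Finset (Fin (6*t+2)) := Finset.attachFin (Finset.Icc (2*t+2) (4*t+1)) (Y_lt t)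

lemma Yc_card (t : ℕ) (ht : 1 ≤ t) : (Yc t).card = 2*t := by
  rw [Yc, Finset.card_attachFin, Nat.card_Icc]; omega

lemma mem_Yc (t : ℕ) (x : Fin (6*t+2)) : x ∈ Yc t ↔ 2*t+2 ≤ x.val ∧ x.val ≤ 4*t+1 := by
  rw [Yc, Finset.mem_attachFin, Finset.mem_Icc]

lemma card_le_of_indep_avoid (t : ℕ) (ht : 1 ≤ t) (S : Finset (Fin (6*t+2)))
    (hind : IsIndepSet' (GG t) S)
    (hav : ∀ x ∈ S, ¬(2*t+2 ≤ x.val ∧ x.val ≤ 4*t+1)) : S.card ≤ 2*t+1 := by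
  classical
  have key : ∀ a b : ℕ, a < 6*t+2 → b < 6*t+2 → a < b → ¬(2*t+2 ≤ a ∧ a ≤ 4*t+1) →
      a / 2 = b / 2 → Ec t a b := by
    intro a b ha hb hab hava hg
    have hb1 : b = a + 1 := by omega
    have ha2 : a % 2 = 0 := by omega
    unfold Ec
    rcases Nat.lt_or_ge a 1 with h0 | h1
    · exact Or.inl (by omega)
    rcases Nat.lt_or_ge a (2*t) with hlt | hge
    · exact Or.inr (Or.inl (by omega))
    rcases Nat.eq_or_lt_of_le hge with heq | hgt
    · exact Or.inr (Or.inr (Or.inl (by omega)))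
    · refine Or.inr (Or.inr (Or.inr (Or.inr (Or.inr (Or.inr ⟨(a - 4*t)/2, by omega⟩)))))
  have hsub : ∀ x ∈ S, x.val / 2 ∈ Finset.range (3*t+1) \ Finset.Icc (t+1) (2*t) := by
    intro x hx
    simp only [Finset.mem_sdiff, Finset.mem_range, Finset.mem_Icc]
    have := x.2
    have := hav x hx
    omega
  have hinj : Set.InjOn (fun x : Fin (6*t+2) => x.val / 2) S := by
    intro x hx y hy hxy
    by_contra hne
    rcases lt_trichotomy x.val y.val with hlt | heq | hlt
    · exact hind x hx y hy ((SimpleGraph.fromRel_adj _ _ _).2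
        ⟨hne, Or.inl (key _ _ x.2 y.2 hlt (hav x hx) hxy)⟩)
    · exact hne (Fin.ext heq)
    · exact hind x hx y hy ((SimpleGraph.fromRel_adj _ _ _).2
        ⟨hne, Or.inr (key _ _ y.2 x.2 hlt (hav y hy) hxy.symm)⟩)
  calc S.card ≤ (Finset.range (3*t+1) \ Finset.Icc (t+1) (2*t)).card :=
        Finset.card_le_card_of_injOn _ hsub hinj
    _ = 2*t+1 := by
        have hss : Finset.Icc (t+1) (2*t) ⊆ Finset.range (3*t+1) := by
          intro m hm
          simp only [Finset.mem_Icc] at hm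
          simp only [Finset.mem_range]
          omega
        rw [Finset.card_sdiff_of_subset hss, Finset.card_range, Nat.card_Icc]
        omega

/-! ### the sparing sets -/

def fS (t q p : ℕ) : ℕ :=
  if p = q then 2*t+1+p else if ((p < q) ↔ (p % 2 = 1)) then 4*t+1+p else p

lemma fS_lt (t q : ℕ) : ∀ m ∈ insert 0 (insert (2*t+1) ((Finset.Icc 1 (2*t)).image (fS t q))),
    m < 6*t+2 := by
  intro m hm
  simp only [Finset.mem_insert, Finset.mem_image, Finset.mem_Icc] at hm
  rcases hm with rfl | rfl | ⟨p, hp, rfl⟩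
  · omega
  · omega
  · unfold fS; split_ifs <;> omega

def Sq (t q : ℕ) : Finset (Fin (6*t+2)) :=
  Finset.attachFin (insert 0 (insert (2*t+1) ((Finset.Icc 1 (2*t)).image (fS t q)))) (fS_lt t q)

lemma mem_Sq (t q : ℕ) (x : Fin (6*t+2)) :
    x ∈ Sq t q ↔ x.val = 0 ∨ x.val = 2*t+1 ∨ ∃ p, 1 ≤ p ∧ p ≤ 2*t ∧ x.val = fS t q p := by
  rw [Sq, Finset.mem_attachFin]
  simp only [Finset.mem_insert, Finset.mem_image, Finset.mem_Icc]
  constructor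
  · rintro (h | h | ⟨p, ⟨h1, h2⟩, h3⟩)
    exacts [Or.inl h, Or.inr (Or.inl h), Or.inr (Or.inr ⟨p, h1, h2, h3.symm⟩)]
  · rintro (h | h | ⟨p, h1, h2, h3⟩)
    exacts [Or.inl h, Or.inr (Or.inl h), Or.inr (Or.inr ⟨p, ⟨h1, h2⟩, h3.symm⟩)]

lemma gcl_fS (t q p : ℕ) (h1 : 1 ≤ p) (h2 : p ≤ 2*t) : gcl t (fS t q p) = p := by
  unfold fS gcl
  split_ifs <;> omega

lemma Sq_card (t q : ℕ) (ht : 1 ≤ t) : (Sq t q).card = 2*t+2 := by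
  rw [Sq, Finset.card_attachFin]
  have himg : ((Finset.Icc 1 (2*t)).image (fS t q)).card = 2*t := by
    rw [Finset.card_image_of_injOn, Nat.card_Icc]
    · omega
    · intro a ha b hb hab
      simp only [Finset.coe_Icc, Set.mem_Icc] at ha hb
      have : gcl t (fS t q a) = gcl t (fS t q b) := by rw [hab]
      rwa [gcl_fS t q a ha.1 ha.2, gcl_fS t q b hb.1 hb.2] at this
  have h0 : (0 : ℕ) ∉ insert (2*t+1) ((Finset.Icc 1 (2*t)).image (fS t q)) := by
    simp only [Finset.mem_insert, Finset.mem_image, Finset.mem_Icc]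
    push_neg
    refine ⟨by omega, ?_⟩
    intro p hp
    unfold fS; split_ifs <;> omega
  have h1 : (2*t+1 : ℕ) ∉ (Finset.Icc 1 (2*t)).image (fS t q) := by
    simp only [Finset.mem_image, Finset.mem_Icc]
    rintro ⟨p, hp, hfp⟩
    revert hfp
    unfold fS; split_ifs <;> omega
  rw [Finset.card_insert_of_notMem h0, Finset.card_insert_of_notMem h1, himg]

lemma Sq_indep (t q : ℕ) (ht : 1 ≤ t) (hq1 : 1 ≤ q) (hq2 : q ≤ 2*t) :
    IsIndepSet' (GG t) (Sq t q) := by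
  refine indep_of_noEc t _ ?_
  intro x hx y hy hE
  rw [mem_Sq] at hx hy
  rcases hE with ⟨h1,h2⟩|⟨h1,h2,h3⟩|⟨h1,h2⟩|⟨h1,h2,h3⟩|⟨h1,h2,h3⟩|⟨h1,h2,h3⟩|⟨i,hi1,hi2,hi3,hi4⟩ <;>
  · rcases hx with hx | hx | ⟨p, hp1, hp2, hx⟩ <;>
    rcases hy with hy | hy | ⟨p', hp1', hp2', hy⟩ <;>
    · try unfold fS at hx
      try unfold fS at hy
      first
        | omega
        | (split_ifs at hx hy <;> omega)
        | (split_ifs at hx <;> omega)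
        | (split_ifs at hy <;> omega)

lemma Sq_inter (t q : ℕ) (x : Fin (6*t+2)) (hx : x ∈ Sq t q)
    (hc : 2*t+2 ≤ x.val ∧ x.val ≤ 4*t+1) : x.val = 2*t+1+q := by
  rw [mem_Sq] at hx
  rcases hx with hx | hx | ⟨p, hp1, hp2, hx⟩
  · omega
  · omega
  · revert hx; unfold fS; split_ifs <;> omega



/-- 2-adic valuation -/
def ee (m : ℕ) : ℕ := m.factorization 2

lemma ee_dvd (m : ℕ) : 2^(ee m) ∣ m := Nat.ordProj_dvd m 2

lemma ee_mod (m : ℕ) (hm : 1 ≤ m) : m % 2^(ee m + 1) = 2^(ee m) := by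
  have ho : ¬ 2 ∣ (m / 2^(ee m)) := Nat.not_dvd_ordCompl Nat.prime_two (by omega : m ≠ 0)
  have ho2 : (m / 2^(ee m)) % 2 = 1 := by
    rcases Nat.mod_two_eq_zero_or_one (m / 2^(ee m)) with h | h
    · exact absurd (Nat.dvd_of_mod_eq_zero h) ho
    · exact h
  have hm2 : m = 2^(ee m) * (m / 2^(ee m)) := (Nat.ordProj_mul_ordCompl_eq_self m 2).symm
  set e := ee m with he
  set o := m / 2^e with hoo
  rw [pow_succ]
  conv_lhs => rw [hm2]
  rw [Nat.mul_mod_mul_left, ho2, mul_one]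

lemma ee_le (m k : ℕ) (h1 : 1 ≤ m) (h2 : m ≤ 2^k) : ee m ≤ k := by
  have h := Nat.le_of_dvd (by omega) (ee_dvd m)
  have := Nat.one_lt_two
  by_contra hc
  push_neg at hc
  have : 2^(k+1) ≤ 2^(ee m) := Nat.pow_le_pow_right (by omega) (by omega)
  have : 2^k < 2^(k+1) := Nat.pow_lt_pow_right (by omega) (by omega)
  omega

lemma ee_odd (m : ℕ) (h : m % 2 = 1) : ee m = 0 :=
  Nat.factorization_eq_zero_of_not_dvd (by omega)

lemma ee_even (m : ℕ) (h1 : 1 ≤ m) (h : m % 2 = 0) : 1 ≤ ee m :=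
  Nat.Prime.factorization_pos_of_dvd Nat.prime_two (by omega) (by omega)

/-- the spine ancestor relation: `m` is an ancestor of `i` -/
def rS (m i : ℕ) : Prop :=
  1 ≤ i ∧ 1 ≤ m ∧ ee i < ee m ∧ m < i + 2^(ee m) ∧ i < m + 2^(ee m)

/-- core inequality: if `x` has smaller valuation than `y` and they are within
`2^(ee y) + 2^(ee x)` of each other, then they are within `2^(ee y) - 2^(ee x)`. -/
lemma key_ineq {x y : ℕ} (hx : 1 ≤ x) (hy : 1 ≤ y) (hexy : ee x < ee y)
    (h1 : y < x + 2^(ee y) + 2^(ee x)) (h2 : x < y + 2^(ee y) + 2^(ee x)) :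
    y + 2^(ee x) ≤ x + 2^(ee y) ∧ x + 2^(ee x) ≤ y + 2^(ee y) := by
  have hxm := ee_mod x hx
  have hdy : 2^(ee x + 1) ∣ y := dvd_trans (Nat.pow_dvd_pow 2 (by omega)) (ee_dvd y)
  obtain ⟨w, hw⟩ := hdy
  have hxd : x = 2^(ee x + 1) * (x / 2^(ee x + 1)) + 2^(ee x) := by
    conv_lhs => rw [← Nat.div_add_mod x (2^(ee x + 1))]
    rw [hxm]
  set u := x / 2^(ee x + 1) with hu
  set A := 2^(ee x) with hA
  set C := 2^(ee y - ee x - 1) with hC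
  have hAC : 2^(ee y) = 2 * A * C := by
    rw [hA, hC, ← pow_succ', ← pow_add]
    congr 1
    omega
  have hApos : 1 ≤ A := Nat.one_le_two_pow
  have hCpos : 1 ≤ C := Nat.one_le_two_pow
  have hx2 : x = 2*A*u + A := by rw [hxd, hA]; ring_nf
  have hy2 : y = 2*A*w := by rw [hw, hA]; ring_nf
  set E := 2^(ee y) with hE
  have hwu : w ≤ u + C := by
    have h1' : y < x + E + A := h1
    rw [hy2, hx2, hAC] at h1'
    have hlt : (2*A) * w < (2*A) * (u + C + 1) := by ring_nf; ring_nf at h1'; linarith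
    have := Nat.lt_of_mul_lt_mul_left hlt
    omega
  have huw : u + 1 ≤ w + C := by
    have h2' : x < y + E + A := h2
    rw [hy2, hx2, hAC] at h2'
    have hlt : (2*A) * u < (2*A) * (w + C) := by ring_nf; ring_nf at h2'; linarith
    have := Nat.lt_of_mul_lt_mul_left hlt
    omega
  rw [hy2, hx2, hAC]
  constructor
  · have := Nat.mul_le_mul_left (2*A) hwu
    nlinarith
  · have := Nat.mul_le_mul_left (2*A) huw
    nlinarith

lemma rS_trans : Transitive rS := by
  rintro M m i ⟨h1, h2, h3, h4, h5⟩ ⟨g1, g2, g3, g4, g5⟩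
  refine ⟨g1, h2, by omega, ?_, ?_⟩ <;>
  · have hk := key_ineq g2 h2 h3 (by omega) (by omega)
    have e1 : 2^(ee m) ≤ 2^(ee M) := Nat.pow_le_pow_right (by omega) (by omega)
    omega

lemma rS_chain_aux {a b v : ℕ} (hav : rS a v) (hbv : rS b v) (hle : ee a ≤ ee b) :
    a = b ∨ rS b a := by
  obtain ⟨h1, h2, h3, h4, h5⟩ := hav
  obtain ⟨g1, g2, g3, g4, g5⟩ := hbv
  rcases Nat.eq_or_lt_of_le hle with heq | hlt
  · -- same valuation: a = b
    left
    rw [heq] at h4 h5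
    have ham := ee_mod a h2
    rw [heq] at ham
    have hbm := ee_mod b g2
    have hda := Nat.div_add_mod a (2^(ee b + 1))
    have hdb := Nat.div_add_mod b (2^(ee b + 1))
    have hpow : 2^(ee b + 1) = 2 * 2^(ee b) := by rw [pow_succ]; ring
    set qa := a / 2^(ee b + 1) with hqa
    set qb := b / 2^(ee b + 1) with hqb
    set P := 2^(ee b + 1) with hPd
    set Q := 2^(ee b) with hQ
    have hQ1 : 1 ≤ Q := Nat.one_le_two_pow
    have hq1 : P * qa < P * (qb + 1) := by
      calc P * qa < P * qb + P := by omega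
        _ = P * (qb + 1) := by ring
    have hq2 : P * qb < P * (qa + 1) := by
      calc P * qb < P * qa + P := by omega
        _ = P * (qa + 1) := by ring
    have e1 := Nat.lt_of_mul_lt_mul_left hq1
    have e2 := Nat.lt_of_mul_lt_mul_left hq2
    have hqq : qa = qb := by omega
    rw [hqq] at hda
    omega
  · -- ee a < ee b : rS b a
    right
    have hk := key_ineq h2 g2 hlt (by omega) (by omega)
    refine ⟨h2, g2, hlt, by omega, by omega⟩

lemma rS_chain {a b v : ℕ} (hav : rS a v) (hbv : rS b v) : a = b ∨ rS a b ∨ rS b a := by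
  rcases Nat.le_total (ee a) (ee b) with h | h
  · rcases rS_chain_aux hav hbv h with h' | h'
    exacts [Or.inl h', Or.inr (Or.inr h')]
  · rcases rS_chain_aux hbv hav h with h' | h'
    exacts [Or.inl h'.symm, Or.inr (Or.inl h')]

lemma rS_step {j m : ℕ} (hj : 1 ≤ j) (hodd : j % 2 = 1) (hm : 1 ≤ m)
    (hmj : m = j + 1 ∨ j = m + 1) : rS m j := by
  have hje : ee j = 0 := ee_odd j hodd
  have hme : 1 ≤ ee m := ee_even m hm (by omega)
  have h2 : 2 ≤ 2^(ee m) := by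
    calc (2:ℕ) = 2^1 := (pow_one 2).symm
    _ ≤ 2^(ee m) := Nat.pow_le_pow_right (by omega) hme
  exact ⟨hj, hm, by omega, by omega, by omega⟩

/-! ### vertex structure -/

def anchor (t i : ℕ) : ℕ := if i = t then t else if i % 2 = 1 then i else i + 1

def sp (t x : ℕ) : Prop := 1 ≤ x ∧ x ≤ 2*t ∧ x % 2 = 1

instance (t x : ℕ) : Decidable (sp t x) := by unfold sp; infer_instance

def Bg (t x : ℕ) : ℕ :=
  if x = 0 then 0 else if x ≤ 2*t then x/2 else if x = 2*t+1 then t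
  else if x ≤ 4*t+1 then (x - (2*t+1) + 1)/2 else (x - (4*t+1) + 1)/2

def Lg (t x : ℕ) : ℕ :=
  if x = 0 then 1 else if x ≤ 2*t then 2 else if x = 2*t+1 then 3
  else if x ≤ 4*t+1 then (if (x - (2*t+1)) % 2 = 1 then 2 else 3)
  else (if (x - (4*t+1)) % 2 = 1 then 3 else 1)

def br (t x : ℕ) : ℕ :=
  if x ≤ 2*t+1 then 0
  else if x ≤ 4*t+1 then (if (x - (2*t+1)) % 2 = 1 then 1 else 0)
  else (if (x - (4*t+1)) % 2 = 1 then 1 else 0)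

def Kg (t x : ℕ) : ℕ :=
  if sp t x then (x+1)/2 else if x = 0 then 1 else anchor t (Bg t x)

def locAnc (t x y : ℕ) : Prop :=
  Bg t x = Bg t y ∧ 1 ≤ Bg t x ∧ Lg t x < Lg t y ∧ (Lg t x = 1 ∨ br t x = br t y)

def rr (t x y : ℕ) : Prop :=
  (sp t x ∧ sp t y ∧ rS (Kg t x) (Kg t y)) ∨
  (sp t x ∧ ¬sp t y ∧ (Kg t x = Kg t y ∨ rS (Kg t x) (Kg t y))) ∨
  (¬sp t x ∧ ¬sp t y ∧ locAnc t x y)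

def dd (t k x : ℕ) : ℕ :=
  if sp t x then k - ee (Kg t x) else (k - ee (Kg t x)) + Lg t x

lemma Lg_mem (t x : ℕ) : Lg t x = 1 ∨ Lg t x = 2 ∨ Lg t x = 3 := by
  unfold Lg; split_ifs <;> first | exact absurd ‹False› not_false | omega

lemma Kg_sp (t x : ℕ) (h : sp t x) : Kg t x = (x+1)/2 := by
  unfold Kg; rw [if_pos h]

lemma Kg_nonsp (t x : ℕ) (h : ¬ sp t x) (h0 : x ≠ 0) : Kg t x = anchor t (Bg t x) := by
  unfold Kg; rw [if_neg h, if_neg h0]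

lemma Bg_zero (t : ℕ) : Bg t 0 = 0 := by unfold Bg; simp

lemma anchor_bounds (t i : ℕ) (ht : 1 ≤ t) (h1 : 1 ≤ i) (h2 : i ≤ t) :
    1 ≤ anchor t i ∧ anchor t i ≤ t := by
  unfold anchor; split_ifs <;> first | exact absurd ‹False› not_false | omega

lemma key_anchor_self (t i : ℕ) (h1 : 1 ≤ i) (h2 : i ≤ t) :
    anchor t i = i ∨ rS i (anchor t i) := by
  unfold anchor
  split_ifs with h h'
  · left; omega
  · left; rfl
  · right
    exact rS_step (by omega) (by omega) (by omega) (by omega)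

lemma key_anchor_succ (t i : ℕ) (h1 : 1 ≤ i) (hi : i < t) :
    anchor t i = i + 1 ∨ rS (i+1) (anchor t i) := by
  unfold anchor
  split_ifs with h h'
  · omega
  · right
    exact rS_step (by omega) (by omega) (by omega) (by omega)
  · left; rfl

/-! ### evaluation lemmas for the seven vertex shapes -/

section eval
variable (t i : ℕ)

lemma ev_v1 (ht : 1 ≤ t) : ¬ sp t 0 ∧ Kg t 0 = 1 ∧ Lg t 0 = 1 ∧ Bg t 0 = 0 := by
  refine ⟨by unfold sp; omega, by unfold Kg sp; simp, by unfold Lg; simp, Bg_zero t⟩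

lemma ev_v2 (ht : 1 ≤ t) : ¬ sp t (2*t+1) ∧ Bg t (2*t+1) = t ∧ Lg t (2*t+1) = 3 ∧
    br t (2*t+1) = 0 ∧ Kg t (2*t+1) = anchor t t := by
  have hs : ¬ sp t (2*t+1) := by unfold sp; omega
  refine ⟨hs, ?_, ?_, ?_, ?_⟩
  · unfold Bg; split_ifs <;> first | exact absurd ‹False› not_false | omega
  · unfold Lg; split_ifs <;> first | exact absurd ‹False› not_false | omega
  · unfold br; split_ifs <;> first | exact absurd ‹False› not_false | omega
  · rw [Kg_nonsp t _ hs (by omega)]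
    congr 1
    unfold Bg; split_ifs <;> first | exact absurd ‹False› not_false | omega

lemma ev_ae (h1 : 1 ≤ i) (h2 : i ≤ t) : ¬ sp t (2*i) ∧ Bg t (2*i) = i ∧ Lg t (2*i) = 2 ∧
    br t (2*i) = 0 ∧ Kg t (2*i) = anchor t i := by
  have hs : ¬ sp t (2*i) := by unfold sp; omega
  have hB : Bg t (2*i) = i := by unfold Bg; split_ifs <;> first | exact absurd ‹False› not_false | omega
  refine ⟨hs, hB, ?_, ?_, ?_⟩
  · unfold Lg; split_ifs <;> first | exact absurd ‹False› not_false | omega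
  · unfold br; split_ifs <;> first | exact absurd ‹False› not_false | omega
  · rw [Kg_nonsp t _ hs (by omega), hB]

lemma ev_co (h1 : 1 ≤ i) (h2 : i ≤ t) : ¬ sp t (2*t+2*i) ∧ Bg t (2*t+2*i) = i ∧
    Lg t (2*t+2*i) = 2 ∧ br t (2*t+2*i) = 1 ∧ Kg t (2*t+2*i) = anchor t i := by
  have hs : ¬ sp t (2*t+2*i) := by unfold sp; omega
  have hB : Bg t (2*t+2*i) = i := by unfold Bg; split_ifs <;> first | exact absurd ‹False› not_false | omega
  refine ⟨hs, hB, ?_, ?_, ?_⟩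
  · unfold Lg; split_ifs <;> first | exact absurd ‹False› not_false | omega
  · unfold br; split_ifs <;> first | exact absurd ‹False› not_false | omega
  · rw [Kg_nonsp t _ hs (by omega), hB]

lemma ev_ce (h1 : 1 ≤ i) (h2 : i ≤ t) : ¬ sp t (2*t+1+2*i) ∧ Bg t (2*t+1+2*i) = i ∧
    Lg t (2*t+1+2*i) = 3 ∧ br t (2*t+1+2*i) = 0 ∧ Kg t (2*t+1+2*i) = anchor t i := by
  have hs : ¬ sp t (2*t+1+2*i) := by unfold sp; omega
  have hB : Bg t (2*t+1+2*i) = i := by unfold Bg; split_ifs <;> first | exact absurd ‹False› not_false | omega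
  refine ⟨hs, hB, ?_, ?_, ?_⟩
  · unfold Lg; split_ifs <;> first | exact absurd ‹False› not_false | omega
  · unfold br; split_ifs <;> first | exact absurd ‹False› not_false | omega
  · rw [Kg_nonsp t _ hs (by omega), hB]

lemma ev_bo (h1 : 1 ≤ i) (h2 : i ≤ t) : ¬ sp t (4*t+2*i) ∧ Bg t (4*t+2*i) = i ∧
    Lg t (4*t+2*i) = 3 ∧ br t (4*t+2*i) = 1 ∧ Kg t (4*t+2*i) = anchor t i := by
  have hs : ¬ sp t (4*t+2*i) := by unfold sp; omega
  have hB : Bg t (4*t+2*i) = i := by unfold Bg; split_ifs <;> first | exact absurd ‹False› not_false | omega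
  refine ⟨hs, hB, ?_, ?_, ?_⟩
  · unfold Lg; split_ifs <;> first | exact absurd ‹False› not_false | omega
  · unfold br; split_ifs <;> first | exact absurd ‹False› not_false | omega
  · rw [Kg_nonsp t _ hs (by omega), hB]

lemma ev_be (h1 : 1 ≤ i) (h2 : i ≤ t) : ¬ sp t (4*t+1+2*i) ∧ Bg t (4*t+1+2*i) = i ∧
    Lg t (4*t+1+2*i) = 1 ∧ Kg t (4*t+1+2*i) = anchor t i := by
  have hs : ¬ sp t (4*t+1+2*i) := by unfold sp; omega
  have hB : Bg t (4*t+1+2*i) = i := by unfold Bg; split_ifs <;> first | exact absurd ‹False› not_false | omega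
  refine ⟨hs, hB, ?_, ?_⟩
  · unfold Lg; split_ifs <;> first | exact absurd ‹False› not_false | omega
  · rw [Kg_nonsp t _ hs (by omega), hB]

end eval

lemma shape (t x : ℕ) (ht : 1 ≤ t) (hx : x < 6*t+2) (hns : ¬ sp t x) :
    x = 0 ∨ x = 2*t+1 ∨
    (∃ i, 1 ≤ i ∧ i ≤ t ∧ x = 2*i) ∨
    (∃ i, 1 ≤ i ∧ i ≤ t ∧ x = 2*t+2*i) ∨
    (∃ i, 1 ≤ i ∧ i ≤ t ∧ x = 2*t+1+2*i) ∨
    (∃ i, 1 ≤ i ∧ i ≤ t ∧ x = 4*t+2*i) ∨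
    (∃ i, 1 ≤ i ∧ i ≤ t ∧ x = 4*t+1+2*i) := by
  unfold sp at hns
  by_cases h0 : x = 0
  · exact Or.inl h0
  by_cases hA : x ≤ 2*t
  · exact Or.inr (Or.inr (Or.inl ⟨x/2, by omega⟩))
  by_cases hv2 : x = 2*t+1
  · exact Or.inr (Or.inl hv2)
  by_cases hC : x ≤ 4*t+1
  · rcases Nat.mod_two_eq_zero_or_one (x - (2*t+1)) with hpar | hpar
    · exact Or.inr (Or.inr (Or.inr (Or.inr (Or.inl ⟨(x - (2*t+1))/2, by omega⟩))))
    · exact Or.inr (Or.inr (Or.inr (Or.inl ⟨(x - (2*t+1) + 1)/2, by omega⟩)))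
  · rcases Nat.mod_two_eq_zero_or_one (x - (4*t+1)) with hpar | hpar
    · exact Or.inr (Or.inr (Or.inr (Or.inr (Or.inr (Or.inr ⟨(x - (4*t+1))/2, by omega⟩)))))
    · exact Or.inr (Or.inr (Or.inr (Or.inr (Or.inr (Or.inl ⟨(x - (4*t+1) + 1)/2, by omega⟩)))))

/-! ### properties of the relation rr -/

lemma locAnc_Kg {t x y : ℕ} (hx : ¬ sp t x) (hy : ¬ sp t y) (h : locAnc t x y) :
    Kg t x = Kg t y := by
  obtain ⟨hB, h1, _, _⟩ := h
  have hx0 : x ≠ 0 := by intro h0; rw [h0, Bg_zero t] at h1; omega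
  have hy0 : y ≠ 0 := by intro h0; rw [h0, Bg_zero t] at hB; omega
  rw [Kg_nonsp t x hx hx0, Kg_nonsp t y hy hy0, hB]

lemma locAnc_trans {t x y z : ℕ} (h1 : locAnc t x y) (h2 : locAnc t y z) : locAnc t x z := by
  obtain ⟨hB, hp, hL, hbr⟩ := h1
  obtain ⟨hB', hp', hL', hbr'⟩ := h2
  refine ⟨hB.trans hB', hp, hL.trans hL', ?_⟩
  rcases hbr with h | h
  · exact Or.inl h
  · rcases hbr' with h' | h'
    · exact Or.inl (by have := Lg_mem t x; omega)
    · exact Or.inr (h.trans h')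

lemma rr_trans' {t x y z : ℕ} (h1 : rr t x y) (h2 : rr t y z) : rr t x z := by
  rcases h1 with ⟨sx, sy, hk⟩ | ⟨sx, sy, hk⟩ | ⟨sx, sy, hk⟩ <;>
    rcases h2 with ⟨sy', sz, gk⟩ | ⟨sy', sz, gk⟩ | ⟨sy', sz, gk⟩
  · exact Or.inl ⟨sx, sz, rS_trans hk gk⟩
  · refine Or.inr (Or.inl ⟨sx, sz, Or.inr ?_⟩)
    rcases gk with e | e
    · rwa [← e]
    · exact rS_trans hk e
  · exact absurd sy sy'
  · exact absurd sy' sy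
  · exact absurd sy' sy
  · refine Or.inr (Or.inl ⟨sx, sz, ?_⟩)
    have hKyz := locAnc_Kg sy' sz gk
    rcases hk with e | e
    · exact Or.inl (e.trans hKyz)
    · exact Or.inr (hKyz ▸ e)
  · exact absurd sy' sy
  · exact absurd sy' sy
  · exact Or.inr (Or.inr ⟨sx, sz, locAnc_trans hk gk⟩)

lemma sp_inj {t x y : ℕ} (sx : sp t x) (sy : sp t y) (h : Kg t x = Kg t y) : x = y := by
  rw [Kg_sp t x sx, Kg_sp t y sy] at h
  obtain ⟨a1, a2, a3⟩ := sx
  obtain ⟨b1, b2, b3⟩ := sy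
  omega

lemma L1_form {t x : ℕ} (ht : 1 ≤ t) (hx : x < 6*t+2) (sx : ¬ sp t x)
    (hL : Lg t x = 1) (hB : 1 ≤ Bg t x) : x = 4*t+1+2*(Bg t x) := by
  rcases shape t x ht hx sx with h | h | ⟨i,h1,h2,h⟩ | ⟨i,h1,h2,h⟩ | ⟨i,h1,h2,h⟩ | ⟨i,h1,h2,h⟩ |
      ⟨i,h1,h2,h⟩ <;> subst h
  · rw [Bg_zero t] at hB; omega
  · rw [(ev_v2 t ht).2.2.1] at hL; omega
  · rw [(ev_ae t i h1 h2).2.2.1] at hL; omega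
  · rw [(ev_co t i h1 h2).2.2.1] at hL; omega
  · rw [(ev_ce t i h1 h2).2.2.1] at hL; omega
  · rw [(ev_bo t i h1 h2).2.2.1] at hL; omega
  · rw [(ev_be t i h1 h2).2.1]

lemma L2_form {t x : ℕ} (ht : 1 ≤ t) (hx : x < 6*t+2) (sx : ¬ sp t x)
    (hL : Lg t x = 2) (hB : 1 ≤ Bg t x) :
    (br t x = 0 ∧ x = 2*(Bg t x)) ∨ (br t x = 1 ∧ x = 2*t+2*(Bg t x)) := by
  rcases shape t x ht hx sx with h | h | ⟨i,h1,h2,h⟩ | ⟨i,h1,h2,h⟩ | ⟨i,h1,h2,h⟩ | ⟨i,h1,h2,h⟩ |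
      ⟨i,h1,h2,h⟩ <;> subst h
  · rw [Bg_zero t] at hB; omega
  · rw [(ev_v2 t ht).2.2.1] at hL; omega
  · exact Or.inl ⟨(ev_ae t i h1 h2).2.2.2.1, by rw [(ev_ae t i h1 h2).2.1]⟩
  · exact Or.inr ⟨(ev_co t i h1 h2).2.2.2.1, by rw [(ev_co t i h1 h2).2.1]⟩
  · rw [(ev_ce t i h1 h2).2.2.1] at hL; omega
  · rw [(ev_bo t i h1 h2).2.2.1] at hL; omega
  · rw [(ev_be t i h1 h2).2.2.1] at hL; omega

lemma uniq_L1 {t x y : ℕ} (ht : 1 ≤ t) (hx : x < 6*t+2) (hy : y < 6*t+2)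
    (sx : ¬ sp t x) (sy : ¬ sp t y) (hB : Bg t x = Bg t y) (hBp : 1 ≤ Bg t x)
    (hLx : Lg t x = 1) (hLy : Lg t y = 1) : x = y := by
  rw [L1_form ht hx sx hLx hBp, L1_form ht hy sy hLy (hB ▸ hBp), hB]

lemma uniq_L2 {t x y : ℕ} (ht : 1 ≤ t) (hx : x < 6*t+2) (hy : y < 6*t+2)
    (sx : ¬ sp t x) (sy : ¬ sp t y) (hB : Bg t x = Bg t y) (hBp : 1 ≤ Bg t x)
    (hLx : Lg t x = 2) (hLy : Lg t y = 2) (hbr : br t x = br t y) : x = y := by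
  rcases L2_form ht hx sx hLx hBp with ⟨e1, e2⟩ | ⟨e1, e2⟩ <;>
    rcases L2_form ht hy sy hLy (hB ▸ hBp) with ⟨f1, f2⟩ | ⟨f1, f2⟩ <;>
    rw [e2, f2, hB] <;> omega

lemma mk1 {t x y : ℕ} (h1 : sp t x) (h2 : sp t y) (h3 : rS (Kg t x) (Kg t y)) : rr t x y :=
  Or.inl ⟨h1, h2, h3⟩

lemma mk2 {t x y : ℕ} (h1 : sp t x) (h2 : ¬ sp t y)
    (h3 : Kg t x = Kg t y ∨ rS (Kg t x) (Kg t y)) : rr t x y :=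
  Or.inr (Or.inl ⟨h1, h2, h3⟩)

lemma mk3 {t x y : ℕ} (h1 : ¬ sp t x) (h2 : ¬ sp t y) (h3 : locAnc t x y) : rr t x y :=
  Or.inr (Or.inr ⟨h1, h2, h3⟩)

lemma rr_chain {t a b v : ℕ} (ht : 1 ≤ t) (ha : a < 6*t+2) (hb : b < 6*t+2)
    (hv : v < 6*t+2) (h1 : rr t a v) (h2 : rr t b v) : a = b ∨ rr t a b ∨ rr t b a := by
  rcases h1 with ⟨sa, sv, hk⟩ | ⟨sa, sv, hk⟩ | ⟨sa, sv, hk⟩ <;>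
    rcases h2 with ⟨sb, sv', gk⟩ | ⟨sb, sv', gk⟩ | ⟨sb, sv', gk⟩
  · rcases rS_chain hk gk with e | e | e
    · exact Or.inl (sp_inj sa sb e)
    · exact Or.inr (Or.inl (mk1 sa sb e))
    · exact Or.inr (Or.inr (mk1 sb sa e))
  · exact absurd sv sv'
  · exact absurd sv sv'
  · exact absurd sv' sv
  · -- both spine, v nonspine
    rcases hk with e | e <;> rcases gk with f | f
    · exact Or.inl (sp_inj sa sb (e.trans f.symm))
    · exact Or.inr (Or.inr (mk1 sb sa (e ▸ f)))
    · exact Or.inr (Or.inl (mk1 sa sb (f ▸ e)))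
    · rcases rS_chain e f with e' | e' | e'
      · exact Or.inl (sp_inj sa sb e')
      · exact Or.inr (Or.inl (mk1 sa sb e'))
      · exact Or.inr (Or.inr (mk1 sb sa e'))
  · -- a spine, b nonspine (locAnc b v)
    have hKbv := locAnc_Kg sb sv' gk
    exact Or.inr (Or.inl (mk2 sa sb (by rw [hKbv]; exact hk)))
  · exact absurd sv' sv
  · -- a nonspine (locAnc a v), b spine
    have hKav := locAnc_Kg sa sv hk
    exact Or.inr (Or.inr (mk2 sb sa (by rw [hKav]; exact gk)))
  · -- both nonspine, locAnc to v
    obtain ⟨hBa, hpa, hLa, hbra⟩ := hk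
    obtain ⟨hBb, hpb, hLb, hbrb⟩ := gk
    have hBab : Bg t a = Bg t b := hBa.trans hBb.symm
    have hLav := Lg_mem t a
    have hLbv := Lg_mem t b
    have hLvv := Lg_mem t v
    rcases hLav with e | e | e <;> rcases hLbv with f | f | f
    · exact Or.inl (uniq_L1 ht ha hb sa sb hBab hpa e f)
    · exact Or.inr (Or.inl (mk3 sa sb ⟨hBab, hpa, by omega, Or.inl e⟩))
    · exact Or.inr (Or.inl (mk3 sa sb ⟨hBab, hpa, by omega, Or.inl e⟩))
    · exact Or.inr (Or.inr (mk3 sb sa ⟨hBab.symm, hpb, by omega, Or.inl f⟩))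
    · have hva : br t a = br t v := by
        rcases hbra with h' | h'
        · omega
        · exact h'
      have hvb : br t b = br t v := by
        rcases hbrb with h' | h'
        · omega
        · exact h'
      exact Or.inl (uniq_L2 ht ha hb sa sb hBab hpa e f (hva.trans hvb.symm))
    · omega
    · exact Or.inr (Or.inr (mk3 sb sa ⟨hBab.symm, hpb, by omega, Or.inl f⟩))
    · omega
    · omega

/-! ### bounds and depth -/

lemma Bg_bounds {t x : ℕ} (ht : 1 ≤ t) (hx : x < 6*t+2) (hns : ¬ sp t x) (h0 : x ≠ 0) :
    1 ≤ Bg t x ∧ Bg t x ≤ t := by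
  rcases shape t x ht hx hns with h | h | ⟨i,h1,h2,h⟩ | ⟨i,h1,h2,h⟩ | ⟨i,h1,h2,h⟩ | ⟨i,h1,h2,h⟩ |
      ⟨i,h1,h2,h⟩ <;> subst h
  · omega
  · rw [(ev_v2 t ht).2.1]; omega
  · rw [(ev_ae t i h1 h2).2.1]; omega
  · rw [(ev_co t i h1 h2).2.1]; omega
  · rw [(ev_ce t i h1 h2).2.1]; omega
  · rw [(ev_bo t i h1 h2).2.1]; omega
  · rw [(ev_be t i h1 h2).2.1]; omega

lemma Kg_bounds {t x : ℕ} (ht : 1 ≤ t) (hx : x < 6*t+2) : 1 ≤ Kg t x ∧ Kg t x ≤ t := by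
  by_cases hs : sp t x
  · rw [Kg_sp t x hs]; obtain ⟨a1, a2, a3⟩ := hs; omega
  · by_cases h0 : x = 0
    · subst h0; rw [(ev_v1 t ht).2.1]; omega
    · rw [Kg_nonsp t x hs h0]
      obtain ⟨b1, b2⟩ := Bg_bounds ht hx hs h0
      exact anchor_bounds t _ ht b1 b2

lemma dd_mono {t k x y : ℕ} (ht : t = 2^k) (hx : x < 6*t+2) (hy : y < 6*t+2)
    (h : rr t x y) : dd t k x < dd t k y := by
  have ht1 : 1 ≤ t := by rw [ht]; exact Nat.one_le_two_pow
  have ex : ee (Kg t x) ≤ k :=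
    ee_le _ k (Kg_bounds ht1 hx).1 (by rw [← ht]; exact (Kg_bounds ht1 hx).2)
  have ey : ee (Kg t y) ≤ k :=
    ee_le _ k (Kg_bounds ht1 hy).1 (by rw [← ht]; exact (Kg_bounds ht1 hy).2)
  unfold dd
  rcases h with ⟨sx, sy, hk⟩ | ⟨sx, sy, hk⟩ | ⟨sx, sy, hk⟩
  · rw [if_pos sx, if_pos sy]
    obtain ⟨_, _, hlt, _, _⟩ := hk
    omega
  · rw [if_pos sx, if_neg sy]
    have hL := Lg_mem t y
    rcases hk with e | e
    · rw [e]; omega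
    · obtain ⟨_, _, hlt, _, _⟩ := e; omega
  · rw [if_neg sx, if_neg sy]
    have hKxy := locAnc_Kg sx sy hk
    obtain ⟨_, _, hL, _⟩ := hk
    rw [hKxy]
    omega

lemma dd_bound {t k x : ℕ} (hx : x < 6*t+2) : dd t k x < k + 4 := by
  unfold dd
  have hL := Lg_mem t x
  split_ifs <;> omega


/-! ### adjacency gives comparability -/

lemma adj_rr (t : ℕ) (ht : 1 ≤ t) (x y : ℕ) (hE : Ec t x y) : rr t x y ∨ rr t y x := by
  rcases hE with ⟨h1,h2⟩|⟨h1,h2,h3⟩|⟨h1,h2⟩|⟨h1,h2,h3⟩|⟨h1,h2,h3⟩|⟨h1,h2,h3⟩|⟨i,hi1,hi2,hi3,hi4⟩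
  · -- v1 -- a1
    subst h1; subst h2
    have sp1 : sp t 1 := ⟨le_refl 1, by omega, by omega⟩
    refine Or.inr (mk2 sp1 (ev_v1 t ht).1 (Or.inl ?_))
    rw [Kg_sp t 1 sp1, (ev_v1 t ht).2.1]
  · -- a-path
    subst h3
    rcases Nat.mod_two_eq_zero_or_one x with hpar | hpar
    · -- x even, x+1 spine
      obtain ⟨i, rfl⟩ : ∃ i, x = 2*i := ⟨x/2, by omega⟩
      obtain ⟨ns, hB, hL, hbr, hK⟩ := ev_ae t i (by omega) (by omega)
      have spy : sp t (2*i+1) := ⟨by omega, by omega, by omega⟩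
      have hKy : Kg t (2*i+1) = i+1 := by rw [Kg_sp t _ spy]; omega
      refine Or.inr (mk2 spy ns ?_)
      rw [hKy, hK]
      rcases key_anchor_succ t i (by omega) (by omega) with e | e
      · exact Or.inl e.symm
      · exact Or.inr e
    · -- x odd spine
      have spx : sp t x := ⟨h1, by omega, hpar⟩
      set i := (x+1)/2 with hidef
      have hy2 : x+1 = 2*i := by omega
      obtain ⟨ns, hB, hL, hbr, hK⟩ := ev_ae t i (by omega) (by omega)
      rw [hy2]
      have hKx : Kg t x = i := by rw [Kg_sp t x spx]
      refine Or.inl (mk2 spx ns ?_)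
      rw [hKx, hK]
      rcases key_anchor_self t i (by omega) (by omega) with e | e
      · exact Or.inl e.symm
      · exact Or.inr e
  · -- a_{2t} -- v2
    subst h1; subst h2
    obtain ⟨nsa, hBa, hLa, hbra, _⟩ := ev_ae t t ht le_rfl
    obtain ⟨nsv, hBv, hLv, hbrv, _⟩ := ev_v2 t ht
    refine Or.inl (mk3 nsa nsv ⟨?_, ?_, ?_, Or.inr ?_⟩)
    · rw [hBa, hBv]
    · rw [hBa]; exact ht
    · rw [hLa, hLv]; omega
    · rw [hbra, hbrv]
  · -- a_p -- c_p
    subst h3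
    rcases Nat.mod_two_eq_zero_or_one x with hpar | hpar
    · -- even: a_{2i} -- c_{2i}
      obtain ⟨i, rfl⟩ : ∃ i, x = 2*i := ⟨x/2, by omega⟩
      obtain ⟨nsa, hBa, hLa, hbra, _⟩ := ev_ae t i (by omega) (by omega)
      obtain ⟨nsc, hBc, hLc, hbrc, _⟩ := ev_ce t i (by omega) (by omega)
      have hyc : 2*t+1+2*i = 2*t+1+2*i := rfl
      refine Or.inl (mk3 nsa nsc ⟨?_, ?_, ?_, Or.inr ?_⟩)
      · rw [hBa, hBc]
      · rw [hBa]; omega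
      · rw [hLa, hLc]; omega
      · rw [hbra, hbrc]
    · -- odd: spine a_{2i-1} -- c_{2i-1}
      have spx : sp t x := ⟨h1, h2, hpar⟩
      set i := (x+1)/2 with hidef
      have hyc : 2*t+1+x = 2*t+2*i := by omega
      obtain ⟨nsc, hBc, hLc, hbrc, hKc⟩ := ev_co t i (by omega) (by omega)
      rw [hyc]
      have hKx : Kg t x = i := by rw [Kg_sp t x spx]
      refine Or.inl (mk2 spx nsc ?_)
      rw [hKx, hKc]
      rcases key_anchor_self t i (by omega) (by omega) with e | e
      · exact Or.inl e.symm
      · exact Or.inr e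
  · -- a_p -- b_p
    subst h3
    rcases Nat.mod_two_eq_zero_or_one x with hpar | hpar
    · -- even: b_{2i} is local root above a_{2i}
      obtain ⟨i, rfl⟩ : ∃ i, x = 2*i := ⟨x/2, by omega⟩
      obtain ⟨nsa, hBa, hLa, hbra, _⟩ := ev_ae t i (by omega) (by omega)
      obtain ⟨nsb, hBb, hLb, _⟩ := ev_be t i (by omega) (by omega)
      refine Or.inr (mk3 nsb nsa ⟨?_, ?_, ?_, Or.inl ?_⟩)
      · rw [hBa, hBb]
      · rw [hBb]; omega
      · rw [hLa, hLb]; omega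
      · exact hLb
    · -- odd: spine a_{2i-1} -- b_{2i-1}
      have spx : sp t x := ⟨h1, h2, hpar⟩
      set i := (x+1)/2 with hidef
      have hyc : 4*t+1+x = 4*t+2*i := by omega
      obtain ⟨nsb, hBb, hLb, hbrb, hKb⟩ := ev_bo t i (by omega) (by omega)
      rw [hyc]
      have hKx : Kg t x = i := by rw [Kg_sp t x spx]
      refine Or.inl (mk2 spx nsb ?_)
      rw [hKx, hKb]
      rcases key_anchor_self t i (by omega) (by omega) with e | e
      · exact Or.inl e.symm
      · exact Or.inr e
  · -- c_p -- b_p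
    subst h3
    rcases Nat.mod_two_eq_zero_or_one (x - (2*t+1)) with hpar | hpar
    · -- p even : c_{2i} -- b_{2i}
      set p := x - (2*t+1) with hpdef
      obtain ⟨nsc, hBc, hLc, hbrc, _⟩ := ev_ce t (p/2) (by omega) (by omega)
      obtain ⟨nsb, hBb, hLb, _⟩ := ev_be t (p/2) (by omega) (by omega)
      have hxc : x = 2*t+1+2*(p/2) := by omega
      have hyc : x + 2*t = 4*t+1+2*(p/2) := by omega
      rw [hyc, hxc]
      refine Or.inr (mk3 nsb nsc ⟨?_, ?_, ?_, Or.inl ?_⟩)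
      · rw [hBc, hBb]
      · rw [hBb]; omega
      · rw [hLc, hLb]; omega
      · exact hLb
    · -- p odd : c_{2i-1} -- b_{2i-1}
      set p := x - (2*t+1) with hpdef
      obtain ⟨nsc, hBc, hLc, hbrc, _⟩ := ev_co t ((p+1)/2) (by omega) (by omega)
      obtain ⟨nsb, hBb, hLb, hbrb, _⟩ := ev_bo t ((p+1)/2) (by omega) (by omega)
      have hxc : x = 2*t+2*((p+1)/2) := by omega
      have hyc : x + 2*t = 4*t+2*((p+1)/2) := by omega
      rw [hyc, hxc]
      refine Or.inl (mk3 nsc nsb ⟨?_, ?_, ?_, Or.inr ?_⟩)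
      · rw [hBc, hBb]
      · rw [hBc]; omega
      · rw [hLc, hLb]; omega
      · rw [hbrc, hbrb]
  · -- b_{2i-1} -- b_{2i}
    subst hi3; subst hi4
    obtain ⟨nsbo, hBbo, hLbo, hbrbo, _⟩ := ev_bo t i hi1 hi2
    obtain ⟨nsbe, hBbe, hLbe, _⟩ := ev_be t i hi1 hi2
    have hyc : 4*t+2*i+1 = 4*t+1+2*i := by omega
    rw [hyc]
    refine Or.inr (mk3 nsbe nsbo ⟨?_, ?_, ?_, Or.inl ?_⟩)
    · rw [hBbo, hBbe]
    · rw [hBbe]; omega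
    · rw [hLbo, hLbe]; omega
    · exact hLbe

/-! ### treedepth of GG -/

lemma TreeDepthLE_mono {V : Type*} {G : SimpleGraph V} {h h' : ℕ}
    (hle : h ≤ h') (H : TreeDepthLE G h) : TreeDepthLE G h' := by
  obtain ⟨r, h1, h2, h3, h4, d, h5, h6⟩ := H
  exact ⟨r, h1, h2, h3, h4, d, h5, fun v => lt_of_lt_of_le (h6 v) hle⟩

theorem tdle (k : ℕ) : TreeDepthLE (GG (2^k)) (k+4) := by
  have ht1 : 1 ≤ 2^k := Nat.one_le_two_pow
  refine ⟨fun u v => rr (2^k) u.val v.val, ?_, ?_, ?_, ?_, ?_⟩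
  · intro a b c h1 h2
    exact rr_trans' h1 h2
  · intro a hcon
    exact absurd (dd_mono rfl a.2 a.2 hcon) (lt_irrefl _)
  · intro u v hadj
    rcases (SimpleGraph.fromRel_adj _ _ _).1 hadj with ⟨hne, h | h⟩
    · exact adj_rr _ ht1 _ _ h
    · exact (adj_rr _ ht1 _ _ h).symm
  · intro a b v h1 h2
    rcases rr_chain ht1 a.2 b.2 v.2 h1 h2 with e | e | e
    · exact Or.inl (Fin.val_injective e)
    · exact Or.inr (Or.inl e)
    · exact Or.inr (Or.inr e)
  · exact ⟨fun v => dd (2^k) k v.val, fun u v h => dd_mono rfl u.2 v.2 h,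
      fun v => dd_bound v.2⟩

end MC

/-- For every sufficiently large `c` there is a graph `G` of treedepth at most `c`
and a set `Y` of at least `2^(c-3)` vertices with positive conflict, all of whose
proper subsets have zero conflict. -/
theorem exists_graph_large_minimal_conflict :
    ∃ lambda : ℕ, ∀ c ≥ lambda, ∃ (n : ℕ) (G : SimpleGraph (Fin n)) (Y : Finset (Fin n)),
      treedepth G ≤ c ∧
      2 ^ (c - 3) ≤ Y.card ∧
      0 < confAll G Y ∧
      ∀ Yb : Finset (Fin n), Yb ⊂ Y → confAll G Yb = 0 := by
  classical
  refine ⟨4, ?_⟩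
  intro c hc
  set k := c - 4 with hk
  set t := 2^k with htdef
  have ht1 : (1:ℕ) ≤ t := Nat.one_le_two_pow
  refine ⟨6*t+2, MC.GG t, MC.Yc t, ?_, ?_, ?_, ?_⟩
  · -- treedepth bound
    have h := MC.tdle k
    rw [← htdef] at h
    have h2 : TreeDepthLE (MC.GG t) c := MC.TreeDepthLE_mono (by omega) h
    exact Nat.sInf_le h2
  · -- size of Y
    rw [MC.Yc_card t ht1, htdef]
    have hp := pow_succ 2 k
    have hc3 : c - 3 = k + 1 := by omega
    rw [hc3]
    omega
  · -- positive conflict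
    have hle : alpha ((MC.GG t).induce (((MC.Yc t)ᶜ : Finset (Fin (6*t+2))) : Set (Fin (6*t+2)))) ≤ 2*t+1 := by
      refine MC.alpha_induce_le _ _ _ ?_
      intro S hS hsub
      refine MC.card_le_of_indep_avoid t ht1 S hS ?_
      intro x hx
      have hx2 := hsub x hx
      rw [Finset.mem_coe, Finset.mem_compl, MC.mem_Yc] at hx2
      exact hx2
    unfold confAll
    rw [MC.alpha_GG t ht1]
    omega
  · -- minimality
    intro Yb hYb
    obtain ⟨y0, hy0Y, hy0n⟩ := Finset.exists_of_ssubset hYb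
    have hy0r : 2*t+2 ≤ y0.val ∧ y0.val ≤ 4*t+1 := (MC.mem_Yc t y0).1 hy0Y
    set q := y0.val - (2*t+1) with hqdef
    have hq1 : 1 ≤ q := by omega
    have hq2 : q ≤ 2*t := by
      have := y0.2
      omega
    have hsub : ∀ x ∈ MC.Sq t q, (x : Fin (6*t+2)) ∈ ((Ybᶜ : Finset (Fin (6*t+2))) : Set (Fin (6*t+2))) := by
      intro x hx
      rw [Finset.mem_coe, Finset.mem_compl]
      intro hxYb
      have hxY : x ∈ MC.Yc t := hYb.subset hxYb
      have hxr := (MC.mem_Yc t x).1 hxY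
      have hval := MC.Sq_inter t q x hx hxr
      have hxy0 : x = y0 := Fin.val_injective (by omega)
      rw [hxy0] at hxYb
      exact hy0n hxYb
    have hge : 2*t+2 ≤ alpha ((MC.GG t).induce ((Ybᶜ : Finset (Fin (6*t+2))) : Set (Fin (6*t+2)))) := by
      have h := MC.le_alpha_induce (MC.GG t) _ (MC.Sq t q)
        (MC.Sq_indep t q ht1 hq1 hq2) hsub
      rwa [MC.Sq_card t q ht1] at h
    have hub : alpha (MC.GG t) = 2*t+2 := MC.alpha_GG t ht1
    unfold confAll
    rw [hub]
    omega
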